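/- Let G = (V,E) be a connected finite simple graph, let T = (V,F) with F ⊆ E be a spanning tree of G, and let c be a choice function assigning to each non-tree edge e ∈ E∖F one of its endpoints c(e) ∈ e. Then the standard tree decomposition (T*,B*) of G with skeleton T determined by c is indeed a tree decomposition of G; in particular T* is a tree. -/

import Mathlib

open SimpleGraph

/-- A tree decomposition of a simple graph `G`. -/
def IsTreeDecomp {V W : Type} (G : SimpleGraph V) (T : SimpleGraph W) (B : W → Set V) : Prop :=
  T.IsTree ∧ (∀ v, ∃ w, v ∈ B w) ∧ (∀ u v, G.Adj u v → ∃ w, u ∈ B w ∧ v ∈ B w) ∧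
    ∀ v : V, (T.induce {w | v ∈ B w}).Connected

/-- The (unique) path in a connected graph `T` from `u` to `v`, obtained by
taking an arbitrary walk and removing repetitions. In a tree this is the
unique `u`-`v` path. -/
noncomputable def fcPath {V : Type} (T : SimpleGraph V) (hT : T.Connected)
    (u v : V) : T.Walk u v := by
  classical
  exact ((hT.preconnected u v).some).toPath.1

/-- The vertex set `C_e` of the fundamental cycle of an edge `e = s(u,v)`:
the vertices on the unique `u`-`v` path in the tree `T`. -/
noncomputable def fcSupport {V : Type} (T : SimpleGraph V) (hT : T.Connected)
    (e : Sym2 V) : Set V :=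
  {x | ∀ u v : V, e = s(u, v) → x ∈ (fcPath T hT u v).support}

/-- The tree-edge set `F_e` of the fundamental cycle of an edge `e = s(u,v)`:
the edges on the unique `u`-`v` path in the tree `T`. -/
noncomputable def fcEdges {V : Type} (T : SimpleGraph V) (hT : T.Connected)
    (e : Sym2 V) : Set (Sym2 V) :=
  {f | ∀ u v : V, e = s(u, v) → f ∈ (fcPath T hT u v).edges}

/-- The node graph `T*` of the standard tree decomposition: nodes are the
vertices of `T` together with the edges of `T`, and a vertex node is adjacent
to an edge node iff the vertex is an endpoint of the edge. -/
def starGraph {V : Type} (T : SimpleGraph V) : SimpleGraph (V ⊕ T.edgeSet) :=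
  SimpleGraph.fromRel (fun a b =>
    match a, b with
    | .inl v, .inr f => v ∈ (f.1 : Sym2 V)
    | _, _ => False)

/-- The bags `B*` of the standard tree decomposition with skeleton `T`,
determined by the choice function `c` on non-tree edges. -/
noncomputable def stdBags {V : Type} (G T : SimpleGraph V) (hT : T.Connected)
    (c : Sym2 V → V) : V ⊕ T.edgeSet → Set V :=
  Sum.elim
    (fun v => {v} ∪
      {x | ∃ e ∈ G.edgeSet \ T.edgeSet, x = c e ∧ v ∈ fcSupport T hT e})
    (fun f => {x | x ∈ (f.1 : Sym2 V)} ∪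
      {x | ∃ e ∈ G.edgeSet \ T.edgeSet, x = c e ∧ (f.1 : Sym2 V) ∈ fcEdges T hT e})

section Aux
variable {V : Type} {T : SimpleGraph V}

lemma star_adj (v : V) (f : T.edgeSet) (h : v ∈ (f.1 : Sym2 V)) :
    (_root_.starGraph T).Adj (.inl v) (.inr f) := by
  rw [_root_.starGraph, fromRel_adj]
  exact ⟨by simp, Or.inl h⟩

lemma star_adj_cases {a b : V ⊕ T.edgeSet} (h : (_root_.starGraph T).Adj a b) :
    (∃ v f, v ∈ (f.1 : Sym2 V) ∧ a = .inl v ∧ b = .inr f) ∨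
    (∃ v f, v ∈ (f.1 : Sym2 V) ∧ a = .inr f ∧ b = .inl v) := by
  rw [_root_.starGraph, fromRel_adj] at h
  obtain ⟨-, h | h⟩ := h
  · rcases a with v | f <;> rcases b with w | g
    · simp at h
    · exact Or.inl ⟨v, g, h, rfl, rfl⟩
    · simp at h
    · simp at h
  · rcases a with v | f <;> rcases b with w | g
    · simp at h
    · simp at h
    · exact Or.inr ⟨w, f, h, rfl, rfl⟩
    · simp at h

def liftWalk : ∀ {u v : V}, T.Walk u v → (_root_.starGraph T).Walk (.inl u) (.inl v)
  | _, _, .nil => .nil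
  | _, _, .cons h p =>
    .cons (star_adj _ ⟨_, h⟩ (Sym2.mem_mk_left _ _))
      (.cons (star_adj _ ⟨_, h⟩ (Sym2.mem_mk_right _ _)).symm (liftWalk p))

lemma liftWalk_support : ∀ {u v : V} (p : T.Walk u v) (n : V ⊕ T.edgeSet),
    n ∈ (liftWalk p).support →
    (∃ y ∈ p.support, n = .inl y) ∨ ∃ f : T.edgeSet, n = .inr f ∧ (f.1 : Sym2 V) ∈ p.edges
  | _, _, .nil, n, hn => by
      simp only [liftWalk, SimpleGraph.Walk.support_nil, List.mem_singleton] at hn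
      exact Or.inl ⟨_, by simp, hn⟩
  | u, v, .cons h p, n, hn => by
      simp only [liftWalk, SimpleGraph.Walk.support_cons, List.mem_cons] at hn
      rcases hn with rfl | rfl | hn
      · exact Or.inl ⟨u, by simp, rfl⟩
      · exact Or.inr ⟨_, rfl, by simp⟩
      · rcases liftWalk_support p n hn with ⟨y, hy, rfl⟩ | ⟨f, rfl, hf⟩
        · exact Or.inl ⟨y, by simp [hy], rfl⟩
        · exact Or.inr ⟨f, rfl, by simp [hf]⟩

lemma star_connected (hT : T.Connected) : (_root_.starGraph T).Connected := by
  classical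
  have hne : Nonempty V := hT.nonempty
  rw [connected_iff]
  refine ⟨?_, ⟨.inl hne.some⟩⟩
  have key : ∀ u v : V, (_root_.starGraph T).Reachable (.inl u) (.inl v) := fun u v =>
    (liftWalk ((hT.preconnected u v).some.toPath.1 : T.Walk u v)).reachable
  rintro (u | f) (v | g)
  · exact key u v
  · exact (key u g.1.out.1).trans (star_adj _ g (Sym2.out_fst_mem _)).symm.reachable.symm
  · exact (star_adj _ f (Sym2.out_fst_mem _)).symm.reachable.trans (key _ v)
  · exact ((star_adj _ f (Sym2.out_fst_mem _)).symm.reachable.trans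
      (key _ g.1.out.1)).trans (star_adj _ g (Sym2.out_fst_mem _)).reachable

lemma edge_eq_of_mem {e : Sym2 V} {a w : V} (ha : a ∈ e) (hw : w ∈ e) (hne : a ≠ w) :
    e = s(a, w) := by
  induction e using Sym2.ind with
  | _ x y =>
    rw [Sym2.mem_iff] at ha hw
    rcases ha with rfl | rfl <;> rcases hw with rfl | rfl <;>
      first | exact absurd rfl hne | rfl | exact Sym2.eq_swap

lemma star_proj : ∀ (n : ℕ) {a b : V} (p : (_root_.starGraph T).Walk (.inl a) (.inl b)),
    p.length = n → ∃ q : T.Walk a b, ∀ (u w : V) (hf : s(u, w) ∈ T.edgeSet),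
      s(u, w) ∈ q.edges → s(Sum.inl u, (Sum.inr ⟨s(u, w), hf⟩ : V ⊕ T.edgeSet)) ∈ p.edges := by
  intro n
  induction n using Nat.strong_induction_on with
  | _ n ih =>
    intro a b p hlen
    cases p with
    | nil => exact ⟨.nil, by simp⟩
    | cons h p₂ =>
      rename_i m
      obtain ⟨v, f, hvf, hav, hm⟩ | ⟨v, f, hvf, hav, hm⟩ := star_adj_cases h
      · subst hm
        rw [Sum.inl.injEq] at hav; subst hav
        cases p₂ with
        | cons h₂ p₃ =>
          rename_i m₂
          obtain ⟨v₂, f₂, h₂vf, hav₂, hm₂⟩ | ⟨v₂, f₂, h₂vf, hav₂, hm₂⟩ := star_adj_cases h₂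
          · simp at hav₂
          · rw [Sum.inr.injEq] at hav₂; subst hav₂ hm₂
            have hlt : p₃.length < n := by
              subst hlen; simp only [SimpleGraph.Walk.length_cons]; omega
            obtain ⟨q₃, hq₃⟩ := ih p₃.length hlt p₃ rfl
            by_cases hva : v₂ = a
            · subst hva
              exact ⟨q₃, fun u w hf hm =>
                List.mem_cons_of_mem _ (List.mem_cons_of_mem _ (hq₃ u w hf hm))⟩
            · have hfe : (f.1 : Sym2 V) = s(a, v₂) := edge_eq_of_mem hvf h₂vf (fun h => hva h.symm)
              have hadj : T.Adj a v₂ := by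
                have := f.2; rwa [hfe, mem_edgeSet] at this
              refine ⟨.cons hadj q₃, fun u w hf hm => ?_⟩
              simp only [SimpleGraph.Walk.edges_cons, List.mem_cons] at hm ⊢
              rcases hm with hm | hm
              · rcases Sym2.eq_iff.mp hm with ⟨h1, h2⟩ | ⟨h1, h2⟩
                · subst h1; subst h2
                  have hf2 : (⟨s(u, w), hf⟩ : T.edgeSet) = f := Subtype.ext hfe.symm
                  left; rw [hf2]
                · subst h1; subst h2
                  have hf2 : (⟨s(u, w), hf⟩ : T.edgeSet) = f :=
                    Subtype.ext (by rw [hfe]; exact Sym2.eq_swap)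
                  right; left; rw [hf2]; exact Sym2.eq_swap
              · exact Or.inr (Or.inr (hq₃ u w hf hm))
      · subst hm
        simp at hav

lemma star_acyclic (hA : T.IsAcyclic) : (_root_.starGraph T).IsAcyclic := by
  rw [isAcyclic_iff_forall_adj_isBridge]
  intro a b hab
  rw [isBridge_iff_adj_and_forall_walk_mem_edges]
  -- reduce to the case a = inl v, b = inr f
  suffices H : ∀ (v : V) (f : T.edgeSet), v ∈ (f.1 : Sym2 V) →
      ∀ (p : (_root_.starGraph T).Walk (.inl v) (.inr f)), s(Sum.inl v, Sum.inr f) ∈ p.edges by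
    obtain ⟨v, f, hvf, rfl, rfl⟩ | ⟨v, f, hvf, rfl, rfl⟩ := star_adj_cases hab
    · exact H v f hvf
    · intro p
      rw [Sym2.eq_swap]
      have := H v f hvf p.reverse
      rwa [SimpleGraph.Walk.edges_reverse, List.mem_reverse] at this
  intro v f hvf p
  -- decompose p from the end
  rw [← p.reverse_reverse]
  rw [SimpleGraph.Walk.edges_reverse, List.mem_reverse]
  generalize p.reverse = r
  cases r with
  | cons h₂ p' =>
    rename_i n₂
    obtain ⟨w, g, hwg, hh, hm⟩ | ⟨w, g, hwg, hh, hm⟩ := star_adj_cases h₂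
    · simp at hh
    · rw [Sum.inr.injEq] at hh; subst hh; subst hm
      by_cases hwv : w = v
      · subst hwv
        simp [Sym2.eq_swap]
      · -- w is the other endpoint of f
        have hfe : (f.1 : Sym2 V) = s(v, w) := edge_eq_of_mem hvf hwg (fun h => hwv h.symm)
        have hadj : T.Adj v w := by have := f.2; rwa [hfe, mem_edgeSet] at this
        obtain ⟨q, hq⟩ := star_proj p'.reverse.length p'.reverse rfl
        have hbridge := (isBridge_iff_adj_and_forall_walk_mem_edges.mp
          ((isAcyclic_iff_forall_adj_isBridge.mp hA) hadj)) q
        have := hq v w (by rw [← hfe]; exact f.2) hbridge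
        rw [SimpleGraph.Walk.edges_reverse, List.mem_reverse] at this
        have hfeq : (⟨s(v, w), by rw [← hfe]; exact f.2⟩ : T.edgeSet) = f :=
          Subtype.ext hfe.symm
        rw [hfeq] at this
        simp only [SimpleGraph.Walk.edges_cons, List.mem_cons]
        exact Or.inr this

lemma fcPath_isPath (hT : T.Connected) (u v : V) : (fcPath T hT u v).IsPath := by
  classical
  exact ((hT.preconnected u v).some).toPath.2

lemma fcPath_symm (hA : T.IsAcyclic) (hT : T.Connected) (u v : V) :
    fcPath T hT v u = (fcPath T hT u v).reverse := by
  have := hA.path_unique ⟨fcPath T hT v u, fcPath_isPath hT v u⟩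
    ⟨(fcPath T hT u v).reverse, (fcPath_isPath hT u v).reverse⟩
  exact congrArg Subtype.val this

lemma mem_fcSupport_iff (hA : T.IsAcyclic) (hT : T.Connected) {e : Sym2 V} {u v : V}
    (he : e = s(u, v)) {x : V} :
    x ∈ fcSupport T hT e ↔ x ∈ (fcPath T hT u v).support := by
  constructor
  · exact fun h => h u v he
  · intro h a b hab
    rw [he] at hab
    rcases Sym2.eq_iff.mp hab with ⟨rfl, rfl⟩ | ⟨rfl, rfl⟩
    · exact h
    · rw [fcPath_symm hA hT, SimpleGraph.Walk.support_reverse, List.mem_reverse]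
      exact h

lemma mem_fcEdges_iff (hA : T.IsAcyclic) (hT : T.Connected) {e : Sym2 V} {u v : V}
    (he : e = s(u, v)) {g : Sym2 V} :
    g ∈ fcEdges T hT e ↔ g ∈ (fcPath T hT u v).edges := by
  constructor
  · exact fun h => h u v he
  · intro h a b hab
    rw [he] at hab
    rcases Sym2.eq_iff.mp hab with ⟨rfl, rfl⟩ | ⟨rfl, rfl⟩
    · exact h
    · rw [fcPath_symm hA hT, SimpleGraph.Walk.edges_reverse, List.mem_reverse]
      exact h

lemma mem_fcSupport_self (hT : T.Connected) {e : Sym2 V} {x : V} (hx : x ∈ e) :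
    x ∈ fcSupport T hT e := by
  intro u v huv
  subst huv
  rcases Sym2.mem_iff.mp hx with rfl | rfl
  · exact SimpleGraph.Walk.start_mem_support _
  · exact SimpleGraph.Walk.end_mem_support _

lemma reachable_induce {W : Type} {G : SimpleGraph W} {S : Set W} :
    ∀ {a b : W} (p : G.Walk a b) (hp : ∀ x ∈ p.support, x ∈ S),
    (G.induce S).Reachable ⟨a, hp a p.start_mem_support⟩ ⟨b, hp b p.end_mem_support⟩
  | _, _, .nil, hp => Reachable.refl _
  | _, _, .cons h p, hp => by
      refine Reachable.trans (Adj.reachable ?_)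
        (reachable_induce p (fun x hx => hp x (by simp [hx])))
      exact h

lemma induce_connected_of_walks {W : Type} {G : SimpleGraph W} {S : Set W} {w₀ : W}
    (h₀ : w₀ ∈ S)
    (h : ∀ w ∈ S, ∃ p : G.Walk w₀ w, ∀ x ∈ p.support, x ∈ S) :
    (G.induce S).Connected := by
  rw [connected_iff]
  refine ⟨?_, ⟨⟨w₀, h₀⟩⟩⟩
  have key : ∀ z : S, (G.induce S).Reachable ⟨w₀, h₀⟩ z := by
    rintro ⟨z, hz⟩
    obtain ⟨p, hp⟩ := h z hz
    exact reachable_induce p hp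
  intro a b
  exact (key a).symm.trans (key b)

lemma mem_support_of_mem_edges' {u v : V} (p : T.Walk u v) {g : Sym2 V}
    (hg : g ∈ p.edges) {a : V} (ha : a ∈ g) : a ∈ p.support := by
  induction g using Sym2.ind with
  | _ x y =>
    rcases Sym2.mem_iff.mp ha with rfl | rfl
    · exact p.fst_mem_support_of_mem_edges hg
    · exact p.snd_mem_support_of_mem_edges hg

lemma exists_walk_fc (hA : T.IsAcyclic) (hT : T.Connected) {e : Sym2 V} {x v : V}
    (hx : x ∈ e) (hv : v ∈ fcSupport T hT e) :
    ∃ q : T.Walk x v, (∀ y ∈ q.support, y ∈ fcSupport T hT e) ∧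
      ∀ g ∈ q.edges, g ∈ fcEdges T hT e := by
  classical
  obtain ⟨⟨u₁, u₂⟩, rfl⟩ := e.exists_rep
  set p := fcPath T hT u₁ u₂ with hp
  have hxp : x ∈ p.support := mem_fcSupport_self hT hx u₁ u₂ rfl
  have hvp : v ∈ p.support := (mem_fcSupport_iff hA hT rfl).mp hv
  refine ⟨(p.takeUntil x hxp).reverse.append (p.takeUntil v hvp), ?_, ?_⟩
  · intro y hy
    rw [SimpleGraph.Walk.mem_support_append_iff] at hy
    refine (mem_fcSupport_iff hA hT rfl).mpr ?_
    rcases hy with hy | hy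
    · rw [SimpleGraph.Walk.support_reverse, List.mem_reverse] at hy
      exact p.support_takeUntil_subset hxp hy
    · exact p.support_takeUntil_subset hvp hy
  · intro g hg
    rw [SimpleGraph.Walk.edges_append, List.mem_append] at hg
    refine (mem_fcEdges_iff hA hT rfl).mpr ?_
    rcases hg with hg | hg
    · rw [SimpleGraph.Walk.edges_reverse, List.mem_reverse] at hg
      exact p.edges_takeUntil_subset hxp hg
    · exact p.edges_takeUntil_subset hvp hg

end Aux

/-- For a connected graph `G`, a spanning tree `T ≤ G`, and a
choice function `c` picking an endpoint of each non-tree edge, the standard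
tree decomposition `(T*, B*)` with skeleton `T` is a tree decomposition of
`G`; in particular `T*` is a tree. -/
theorem stmt6 {V : Type} [Fintype V] (G T : SimpleGraph V) (hGconn : G.Connected)
    (hsub : T ≤ G) (hT : T.IsTree) (c : Sym2 V → V)
    (hc : ∀ e ∈ G.edgeSet \ T.edgeSet, c e ∈ e) :
    IsTreeDecomp G (_root_.starGraph T) (stdBags G T hT.isConnected c) ∧
      (_root_.starGraph T).IsTree := by
  classical
  have hA : T.IsAcyclic := hT.2
  have hTc : T.Connected := hT.isConnected
  have starTree : (_root_.starGraph T).IsTree := ⟨star_connected hTc, star_acyclic hA⟩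
  refine ⟨⟨starTree, ?_, ?_, ?_⟩, starTree⟩
  · intro v
    exact ⟨.inl v, Or.inl rfl⟩
  · intro u v huv
    by_cases he : s(u, v) ∈ T.edgeSet
    · exact ⟨.inr ⟨s(u, v), he⟩, Or.inl (Sym2.mem_mk_left u v),
        Or.inl (Sym2.mem_mk_right u v)⟩
    · have heG : s(u, v) ∈ G.edgeSet \ T.edgeSet := ⟨huv, he⟩
      rcases Sym2.mem_iff.mp (hc _ heG) with hcu | hcv
      · exact ⟨.inl v, Or.inr ⟨s(u, v), heG, hcu.symm,
          mem_fcSupport_self _ (Sym2.mem_mk_right u v)⟩, Or.inl rfl⟩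
      · exact ⟨.inl u, Or.inl rfl, Or.inr ⟨s(u, v), heG, hcv.symm,
          mem_fcSupport_self _ (Sym2.mem_mk_left u v)⟩⟩
  · intro x
    have h₀ : (Sum.inl x : V ⊕ T.edgeSet) ∈ {w | x ∈ stdBags G T hT.isConnected c w} :=
      Or.inl rfl
    apply induce_connected_of_walks h₀
    rintro (v | f) hw
    · rcases hw with hxv | ⟨e, heGT, hxc, hvfc⟩
      · have : x = v := hxv
        subst this
        refine ⟨.nil, ?_⟩
        intro n hn
        simp only [SimpleGraph.Walk.support_nil, List.mem_singleton] at hn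
        subst hn
        exact h₀
      · obtain ⟨q, hqs, hqe⟩ := exists_walk_fc hA hT.isConnected
          (show x ∈ e from hxc ▸ hc e heGT) hvfc
        refine ⟨liftWalk q, ?_⟩
        intro n hn
        rcases liftWalk_support q n hn with ⟨y, hy, rfl⟩ | ⟨g, rfl, hg⟩
        · exact Or.inr ⟨e, heGT, hxc, hqs y hy⟩
        · exact Or.inr ⟨e, heGT, hxc, hqe _ hg⟩
    · rcases hw with hxf | ⟨e, heGT, hxc, hffc⟩
      · refine ⟨.cons (star_adj x f hxf) .nil, ?_⟩
        intro n hn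
        simp only [SimpleGraph.Walk.support_cons, SimpleGraph.Walk.support_nil,
          List.mem_cons, List.mem_singleton] at hn
        rcases hn with rfl | rfl | h
        · exact h₀
        · exact Or.inl hxf
        · simp at h
      · have ha : (f.1 : Sym2 V).out.1 ∈ (f.1 : Sym2 V) := Sym2.out_fst_mem _
        have haS : (f.1 : Sym2 V).out.1 ∈ fcSupport T hT.isConnected e := by
          intro u₁ u₂ h12
          exact mem_support_of_mem_edges' _ (hffc u₁ u₂ h12) ha
        obtain ⟨q, hqs, hqe⟩ := exists_walk_fc hA hT.isConnected
          (show x ∈ e from hxc ▸ hc e heGT) haS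
        refine ⟨(liftWalk q).concat (star_adj _ f ha), ?_⟩
        intro n hn
        rw [SimpleGraph.Walk.support_concat] at hn
        rw [List.mem_append, List.mem_singleton] at hn
        rcases hn with hn | rfl
        · rcases liftWalk_support q n hn with ⟨y, hy, rfl⟩ | ⟨g, rfl, hg⟩
          · exact Or.inr ⟨e, heGT, hxc, hqs y hy⟩
          · exact Or.inr ⟨e, heGT, hxc, hqe _ hg⟩
        · exact Or.inr ⟨e, heGT, hxc, hffc⟩
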